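/- Let y_1 < y_2 and let π : ℝ → ℝ be measurable and nonnegative. Then the GEV posterior normalizing constant for n = 2 satisfies the exact identity K_2(π; y) = (1/2)(y_2 − y_1)^{−1} ∫_ℝ π(ξ) dξ (as an identity in [0,∞]). -/

import Mathlib

open MeasureTheory Real Set
open scoped ENNReal Classical

/-- The GEV posterior integrand for data `y`, at parameters `(μ, σ, ξ)`:
`σ^{-(n+1)} ∏_i (1 + ξ(y_i - μ)/σ)^{-(1+1/ξ)} exp(-Σ_i (1 + ξ(y_i - μ)/σ)^{-1/ξ})`
on the set where `1 + ξ(y_i - μ)/σ > 0` for all `i` (and `0` otherwise), with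
the Gumbel interpretation
`σ^{-(n+1)} exp(-Σ_i (y_i - μ)/σ) exp(-Σ_i exp(-(y_i - μ)/σ))` when `ξ = 0`. -/
noncomputable def gevDens (n : ℕ) (y : Fin n → ℝ) (μ σ ξ : ℝ) : ℝ :=
  if ξ = 0 then
    σ ^ (-((n : ℝ) + 1)) * Real.exp (-∑ i, (y i - μ) / σ) *
      Real.exp (-∑ i, Real.exp (-((y i - μ) / σ)))
  else if ∀ i, 0 < 1 + ξ * (y i - μ) / σ then
    σ ^ (-((n : ℝ) + 1)) * (∏ i, (1 + ξ * (y i - μ) / σ) ^ (-(1 + 1 / ξ))) *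
      Real.exp (-∑ i, (1 + ξ * (y i - μ) / σ) ^ (-1 / ξ))
  else 0

/-- The GEV posterior normalizing constant `K_n(π; y)` arising from a
GEV(μ, σ, ξ) likelihood for `y_1, …, y_n` and the prior `π(μ,σ,ξ) ∝ π(ξ)/σ`. -/
noncomputable def gevK (n : ℕ) (y : Fin n → ℝ) (p : ℝ → ℝ) : ℝ≥0∞ :=
  ∫⁻ ξ : ℝ, ENNReal.ofReal (p ξ) *
    ∫⁻ μ : ℝ, ∫⁻ σ in Set.Ioi (0 : ℝ), ENNReal.ofReal (gevDens n y μ σ ξ)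

/-! ### Auxiliary development -/

/-- The standard GEV density with shape `ξ`. -/
noncomputable def g1 (ξ x : ℝ) : ℝ :=
  if ξ = 0 then Real.exp (-x) * Real.exp (-Real.exp (-x))
  else if 0 < 1 + ξ * x then
    (1 + ξ * x) ^ (-(1 + 1 / ξ)) * Real.exp (-(1 + ξ * x) ^ (-1 / ξ))
  else 0

lemma g1_nonneg (ξ x : ℝ) : 0 ≤ g1 ξ x := by
  unfold g1; split_ifs <;> positivity

lemma exp_neg_add (a b : ℝ) : Real.exp (-(a+b)) = Real.exp (-a) * Real.exp (-b) := by
  rw [neg_add, Real.exp_add]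

lemma measurable_g1 (ξ : ℝ) : Measurable (g1 ξ) := by
  unfold g1
  by_cases h : ξ = 0
  · simp only [h, if_true]
    fun_prop
  · simp only [h, if_false]
    have hset : MeasurableSet {x : ℝ | 0 < 1 + ξ * x} := by
      have : Measurable fun x : ℝ => 1 + ξ * x := by fun_prop
      exact this measurableSet_Ioi
    refine Measurable.ite hset ?_ measurable_const
    fun_prop

/-- One-dimensional change of variables for lower Lebesgue integrals. -/
lemma lintegral_image_deriv {s : Set ℝ} {f f' : ℝ → ℝ} (hs : MeasurableSet s)
    (hf' : ∀ x ∈ s, HasDerivWithinAt f (f' x) s x) (hf : Set.InjOn f s) (g : ℝ → ℝ≥0∞) :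
    ∫⁻ x in f '' s, g x = ∫⁻ x in s, ENNReal.ofReal |f' x| * g (f x) := by
  simpa only [ContinuousLinearMap.det_toSpanSingleton] using
    lintegral_image_eq_lintegral_abs_det_fderiv_mul volume hs
      (fun x hx => (hf' x hx).hasFDerivWithinAt) hf g

lemma lint_exp_neg : ∫⁻ t in Ioi (0:ℝ), ENNReal.ofReal (Real.exp (-t)) = 1 := by
  have hi : IntegrableOn (fun t : ℝ => Real.exp (-t)) (Ioi 0) := by
    simpa using exp_neg_integrableOn_Ioi 0 (b := 1) one_pos
  rw [← ofReal_integral_eq_lintegral_ofReal hi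
    (Filter.Eventually.of_forall fun t => (Real.exp_pos _).le)]
  rw [integral_exp_neg_Ioi_zero, ENNReal.ofReal_one]

/-- The standard GEV density integrates to `1` for every shape `ξ`. -/
lemma g1_lintegral (ξ : ℝ) : ∫⁻ x : ℝ, ENNReal.ofReal (g1 ξ x) = 1 := by
  by_cases hξ : ξ = 0
  · subst hξ
    have himg : (fun t : ℝ => -Real.log t) '' Ioi 0 = univ := by
      ext x
      simp only [mem_image, mem_Ioi, mem_univ, iff_true]
      exact ⟨Real.exp (-x), Real.exp_pos _, by rw [Real.log_exp]; ring⟩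
    have hderiv : ∀ t ∈ Ioi (0:ℝ),
        HasDerivWithinAt (fun t : ℝ => -Real.log t) (-t⁻¹) (Ioi 0) t :=
      fun t ht => ((Real.hasDerivAt_log (ne_of_gt ht)).neg).hasDerivWithinAt
    have hinj : InjOn (fun t : ℝ => -Real.log t) (Ioi 0) := by
      intro a ha b hb hab
      have : Real.log a = Real.log b := by linarith [neg_injective hab]
      calc a = Real.exp (Real.log a) := (Real.exp_log ha).symm
        _ = Real.exp (Real.log b) := by rw [this]
        _ = b := Real.exp_log hb
    have := lintegral_image_deriv measurableSet_Ioi hderiv hinj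
      (fun x => ENNReal.ofReal (g1 0 x))
    rw [himg] at this
    rw [← setLIntegral_univ, this]
    rw [setLIntegral_congr_fun measurableSet_Ioi
      (fun t (ht : t ∈ Ioi (0:ℝ)) => ?_), lint_exp_neg]
    have ht' : (0:ℝ) < t := ht
    have h1 : g1 0 (-Real.log t) = t * Real.exp (-t) := by
      simp only [g1, if_pos rfl, if_true, neg_neg, Real.exp_log ht']
    rw [h1, abs_of_neg (neg_lt_zero.mpr (by positivity : (0:ℝ) < t⁻¹)), neg_neg,
      ← ENNReal.ofReal_mul (by positivity)]
    congr 1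
    field_simp
  · -- the case ξ ≠ 0
    set S : Set ℝ := {x | 0 < 1 + ξ * x} with hS
    have hSm : MeasurableSet S := by
      have : Measurable fun x : ℝ => 1 + ξ * x := by fun_prop
      exact this measurableSet_Ioi
    have hvanish : ∀ x ∉ S, g1 ξ x = 0 := by
      intro x hx
      simp only [g1, if_neg hξ]
      have hx' : ¬ (0 < 1 + ξ * x) := hx
      rw [if_neg hx']
    have hout : ∫⁻ x : ℝ, ENNReal.ofReal (g1 ξ x) = ∫⁻ x in S, ENNReal.ofReal (g1 ξ x) := by
      rw [← lintegral_indicator hSm]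
      refine lintegral_congr fun x => ?_
      by_cases hx : x ∈ S
      · rw [indicator_of_mem hx]
      · rw [indicator_of_notMem hx, hvanish x hx, ENNReal.ofReal_zero]
    set φ : ℝ → ℝ := fun t => (t ^ (-ξ) - 1) / ξ with hφ
    have hφval : ∀ t : ℝ, 1 + ξ * φ t = t ^ (-ξ) := by
      intro t; simp only [hφ]; field_simp; ring
    have himg : φ '' Ioi 0 = S := by
      ext x
      simp only [mem_image, mem_Ioi]
      constructor
      · rintro ⟨t, ht, rfl⟩
        show 0 < 1 + ξ * φ t
        rw [hφval]
        exact Real.rpow_pos_of_pos ht _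
      · intro hx
        have hx' : (0:ℝ) < 1 + ξ * x := hx
        refine ⟨(1 + ξ * x) ^ (-ξ⁻¹), Real.rpow_pos_of_pos hx' _, ?_⟩
        have : ((1 + ξ * x) ^ (-ξ⁻¹)) ^ (-ξ) = 1 + ξ * x := by
          rw [← Real.rpow_mul hx'.le]
          rw [show -ξ⁻¹ * -ξ = 1 by field_simp, Real.rpow_one]
        simp only [hφ, this]
        field_simp; ring
    have hderiv : ∀ t ∈ Ioi (0:ℝ),
        HasDerivWithinAt φ (-(t ^ (-ξ - 1))) (Ioi 0) t := by
      intro t ht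
      have h1 : HasDerivAt (fun t : ℝ => t ^ (-ξ)) (-ξ * t ^ (-ξ - 1)) t :=
        Real.hasDerivAt_rpow_const (Or.inl (ne_of_gt ht))
      have h2 : HasDerivAt φ (-ξ * t ^ (-ξ - 1) / ξ) t := (h1.sub_const 1).div_const ξ
      have : -ξ * t ^ (-ξ - 1) / ξ = -(t ^ (-ξ - 1)) := by field_simp
      rw [this] at h2
      exact h2.hasDerivWithinAt
    have hinj : InjOn φ (Ioi 0) := by
      intro a ha b hb hab
      have hpow : a ^ (-ξ) = b ^ (-ξ) := by
        have := hab
        simp only [hφ] at this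
        field_simp at this
        linarith
      have hrec : ∀ c : ℝ, 0 < c → (c ^ (-ξ)) ^ (-ξ)⁻¹ = c := by
        intro c hc
        rw [← Real.rpow_mul hc.le, mul_inv_cancel₀ (neg_ne_zero.mpr hξ), Real.rpow_one]
      calc a = (a ^ (-ξ)) ^ (-ξ)⁻¹ := (hrec a ha).symm
        _ = (b ^ (-ξ)) ^ (-ξ)⁻¹ := by rw [hpow]
        _ = b := hrec b hb
    have hchg := lintegral_image_deriv measurableSet_Ioi hderiv hinj
      (fun x => ENNReal.ofReal (g1 ξ x))
    rw [himg] at hchg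
    rw [hout, hchg]
    rw [setLIntegral_congr_fun measurableSet_Ioi
      (fun t (ht : t ∈ Ioi (0:ℝ)) => ?_), lint_exp_neg]
    have ht' : (0:ℝ) < t := ht
    have hpos : (0:ℝ) < 1 + ξ * φ t := by rw [hφval]; exact Real.rpow_pos_of_pos ht' _
    have e1 : (t ^ (-ξ)) ^ (-(1 + 1/ξ)) = t ^ (ξ + 1) := by
      rw [← Real.rpow_mul ht'.le]
      congr 1
      field_simp
    have e2 : (t ^ (-ξ)) ^ (-1/ξ) = t := by
      rw [← Real.rpow_mul ht'.le, show -ξ * (-1/ξ) = 1 by field_simp, Real.rpow_one]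
    have hg : g1 ξ (φ t) = t ^ (ξ + 1) * Real.exp (-t) := by
      simp only [g1, if_neg hξ, if_pos hpos]
      rw [hφval, e1, e2]
    rw [hg, abs_of_neg (neg_lt_zero.mpr (by positivity : (0:ℝ) < t ^ (-ξ - 1))), neg_neg,
      ← ENNReal.ofReal_mul (by positivity)]
    congr 1
    rw [← mul_assoc, ← Real.rpow_add ht']
    norm_num

/-- The "overlap" function `H ξ s = ∫ g1 ξ u · g1 ξ (u + s) du`. -/
noncomputable def Hf (ξ s : ℝ) : ℝ≥0∞ :=
  ∫⁻ u : ℝ, ENNReal.ofReal (g1 ξ u) * ENNReal.ofReal (g1 ξ (u + s))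

lemma Hf_neg (ξ s : ℝ) : Hf ξ (-s) = Hf ξ s := by
  unfold Hf
  have h1 : ∀ u : ℝ, ENNReal.ofReal (g1 ξ u) * ENNReal.ofReal (g1 ξ (u + -s)) =
      (fun v => ENNReal.ofReal (g1 ξ (v + s)) * ENNReal.ofReal (g1 ξ v)) (u + -s) := by
    intro u; simp only []; rw [show u + -s + s = u by ring]
  calc ∫⁻ u : ℝ, ENNReal.ofReal (g1 ξ u) * ENNReal.ofReal (g1 ξ (u + -s))
      = ∫⁻ u : ℝ, (fun v => ENNReal.ofReal (g1 ξ (v + s)) * ENNReal.ofReal (g1 ξ v)) (u + -s) :=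
        lintegral_congr h1
    _ = ∫⁻ v : ℝ, ENNReal.ofReal (g1 ξ (v + s)) * ENNReal.ofReal (g1 ξ v) :=
        lintegral_add_right_eq_self (μ := volume) (fun v => ENNReal.ofReal (g1 ξ (v + s)) * ENNReal.ofReal (g1 ξ v)) (-s)
    _ = ∫⁻ u : ℝ, ENNReal.ofReal (g1 ξ u) * ENNReal.ofReal (g1 ξ (u + s)) := by
        refine lintegral_congr fun v => mul_comm _ _

lemma Hf_total (ξ : ℝ) : ∫⁻ s : ℝ, Hf ξ s = 1 := by
  unfold Hf
  have hm : AEMeasurable (Function.uncurry fun s u : ℝ =>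
      ENNReal.ofReal (g1 ξ u) * ENNReal.ofReal (g1 ξ (u + s)))
      ((volume : Measure ℝ).prod volume) := by
    apply Measurable.aemeasurable
    refine Measurable.mul (f := fun q : ℝ × ℝ => ENNReal.ofReal (g1 ξ q.2))
      (g := fun q : ℝ × ℝ => ENNReal.ofReal (g1 ξ (q.2 + q.1))) ?_ ?_
    · exact ((measurable_g1 ξ).comp measurable_snd).ennreal_ofReal
    · exact ((measurable_g1 ξ).comp (measurable_snd.add measurable_fst)).ennreal_ofReal
  rw [lintegral_lintegral_swap hm]
  have : ∀ u : ℝ, ∫⁻ s : ℝ, ENNReal.ofReal (g1 ξ u) * ENNReal.ofReal (g1 ξ (u + s)) =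
      ENNReal.ofReal (g1 ξ u) := by
    intro u
    rw [lintegral_const_mul' _ _ ENNReal.ofReal_ne_top]
    have : ∫⁻ s : ℝ, ENNReal.ofReal (g1 ξ (u + s)) = 1 := by
      have h1 : ∀ s : ℝ, ENNReal.ofReal (g1 ξ (u + s)) =
          (fun v => ENNReal.ofReal (g1 ξ v)) (s + u) := fun s => by
        simp only []; rw [add_comm]
      rw [lintegral_congr h1,
        lintegral_add_right_eq_self (μ := volume) (fun v => ENNReal.ofReal (g1 ξ v)) u,
        g1_lintegral]
    rw [this, mul_one]
  rw [lintegral_congr this, g1_lintegral]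

lemma Hf_half (ξ : ℝ) : ∫⁻ s in Ioi (0:ℝ), Hf ξ s = 1/2 := by
  have hneg : ∫⁻ s in Iio (0:ℝ), Hf ξ s = ∫⁻ s in Ioi (0:ℝ), Hf ξ s := by
    have himg : Neg.neg '' Ioi (0:ℝ) = Iio 0 := by
      ext x
      simp only [mem_image, mem_Iio, mem_Ioi]
      constructor
      · rintro ⟨t, ht, rfl⟩; linarith
      · intro hx; exact ⟨-x, by linarith, neg_neg x⟩
    have hderiv : ∀ t ∈ Ioi (0:ℝ),
        HasDerivWithinAt (Neg.neg : ℝ → ℝ) (-1) (Ioi 0) t :=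
      fun t _ => (hasDerivAt_neg t).hasDerivWithinAt
    have := lintegral_image_deriv measurableSet_Ioi hderiv
      (neg_injective.injOn) (Hf ξ)
    rw [himg] at this
    rw [this]
    refine setLIntegral_congr_fun measurableSet_Ioi
      (fun s _ => ?_)
    rw [Hf_neg]
    simp
  have hsplit : (∫⁻ s in Iio (0:ℝ), Hf ξ s) + ∫⁻ s in Ici (0:ℝ), Hf ξ s = 1 := by
    have := lintegral_add_compl (μ := volume) (Hf ξ) (measurableSet_Iio (a := (0:ℝ)))
    rw [compl_Iio] at this
    rw [this, Hf_total]
  have hIci : ∫⁻ s in Ici (0:ℝ), Hf ξ s = ∫⁻ s in Ioi (0:ℝ), Hf ξ s := by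
    rw [← Measure.restrict_congr_set (Ioi_ae_eq_Ici (a := (0:ℝ)))]
  rw [hneg, hIci] at hsplit
  refine (ENNReal.eq_div_iff two_ne_zero ENNReal.ofNat_ne_top).mpr ?_
  rw [two_mul]; exact hsplit

/-- Factorization of the GEV posterior integrand for `n = 2`. -/
lemma gevDens_eq (y : Fin 2 → ℝ) (ξ μ σ : ℝ) (hσ : 0 < σ) :
    gevDens 2 y μ σ ξ =
      σ ^ (-3 : ℝ) * (g1 ξ ((y 0 - μ) / σ) * g1 ξ ((y 1 - μ) / σ)) := by
  have hexp : -(((2:ℕ) : ℝ) + 1) = (-3 : ℝ) := by norm_num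
  by_cases hξ : ξ = 0
  · simp only [gevDens, g1, if_pos hξ, hexp, Fin.sum_univ_two]
    simp only [exp_neg_add]
    ring
  · simp only [gevDens, g1, if_neg hξ, mul_div_assoc, hexp, Fin.sum_univ_two, Fin.prod_univ_two]
    by_cases hc : ∀ i : Fin 2, 0 < 1 + ξ * ((y i - μ) / σ)
    · rw [if_pos hc, if_pos (hc 0), if_pos (hc 1)]
      simp only [exp_neg_add]
      ring
    · rw [if_neg hc]
      push_neg at hc
      obtain ⟨i, hi⟩ := hc
      have h01 : i = 0 ∨ i = 1 := by
        rcases i with ⟨iv, hiv⟩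
        interval_cases iv
        · left; rfl
        · right; rfl
      rcases h01 with rfl | rfl
      · rw [if_neg (not_lt.mpr hi)]; ring
      · rw [if_neg (not_lt.mpr hi)]; ring

/-- Integrating out the location parameter. -/
lemma mu_step (y0 y1 ξ σ : ℝ) (hσ : 0 < σ) :
    (∫⁻ μ : ℝ, ENNReal.ofReal
        (σ ^ (-3 : ℝ) * (g1 ξ ((y0 - μ) / σ) * g1 ξ ((y1 - μ) / σ)))) =
      ENNReal.ofReal (σ ^ (-2 : ℝ)) * Hf ξ ((y1 - y0) / σ) := by
  have harg : ∀ μ : ℝ, (y1 - μ) / σ = (y0 - μ) / σ + (y1 - y0) / σ := by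
    intro μ; field_simp; ring
  have hsplit : ∀ μ : ℝ,
      ENNReal.ofReal (σ ^ (-3 : ℝ) * (g1 ξ ((y0 - μ) / σ) * g1 ξ ((y1 - μ) / σ))) =
      ENNReal.ofReal (σ ^ (-3 : ℝ)) *
        (ENNReal.ofReal (g1 ξ ((y0 - μ) / σ)) *
          ENNReal.ofReal (g1 ξ ((y0 - μ) / σ + (y1 - y0) / σ))) := by
    intro μ
    rw [← harg μ, ENNReal.ofReal_mul (by positivity),
      ENNReal.ofReal_mul (g1_nonneg ξ _)]
  rw [lintegral_congr hsplit, lintegral_const_mul' _ _ ENNReal.ofReal_ne_top]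
  -- change of variables x = (y0 - μ)/σ
  set G : ℝ → ℝ≥0∞ := fun x =>
    ENNReal.ofReal (g1 ξ x) * ENNReal.ofReal (g1 ξ (x + (y1 - y0) / σ)) with hG
  have himg : (fun μ : ℝ => (y0 - μ) / σ) '' univ = univ := by
    refine eq_univ_of_forall fun x => ⟨y0 - σ * x, mem_univ _, ?_⟩
    field_simp; ring
  have hderiv : ∀ μ ∈ (univ : Set ℝ),
      HasDerivWithinAt (fun μ : ℝ => (y0 - μ) / σ) (-1 / σ) univ μ := by
    intro μ _
    exact (((hasDerivAt_id μ).const_sub y0).div_const σ).hasDerivWithinAt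
  have hinj : InjOn (fun μ : ℝ => (y0 - μ) / σ) univ := by
    intro a _ b _ hab
    field_simp at hab
    linarith
  have hchg := lintegral_image_deriv MeasurableSet.univ hderiv hinj G
  rw [himg, setLIntegral_univ, setLIntegral_univ] at hchg
  have habs : |(-1 : ℝ) / σ| = σ⁻¹ := by
    rw [abs_div, abs_neg, abs_one, abs_of_pos hσ, one_div]
  have hchg2 : Hf ξ ((y1 - y0) / σ) =
      ENNReal.ofReal σ⁻¹ * ∫⁻ μ : ℝ, G ((y0 - μ) / σ) := by
    rw [Hf, hchg]
    rw [← lintegral_const_mul' _ _ ENNReal.ofReal_ne_top]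
    refine lintegral_congr fun μ => by rw [habs]
  have hμint : (∫⁻ μ : ℝ, G ((y0 - μ) / σ)) =
      ENNReal.ofReal σ * Hf ξ ((y1 - y0) / σ) := by
    rw [hchg2, ← mul_assoc, ← ENNReal.ofReal_mul hσ.le,
      mul_inv_cancel₀ (ne_of_gt hσ), ENNReal.ofReal_one, one_mul]
  rw [hμint, ← mul_assoc, ← ENNReal.ofReal_mul (by positivity)]
  congr 2
  rw [show (-2 : ℝ) = -3 + 1 by norm_num, Real.rpow_add hσ, Real.rpow_one]

/-- Integrating out the scale parameter. -/
lemma sigma_step (ξ d : ℝ) (hd : 0 < d) :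
    (∫⁻ σ in Ioi (0:ℝ), ENNReal.ofReal (σ ^ (-2 : ℝ)) * Hf ξ (d / σ)) =
      ENNReal.ofReal d⁻¹ * ∫⁻ s in Ioi (0:ℝ), Hf ξ s := by
  have himg : (fun σ : ℝ => d / σ) '' Ioi 0 = Ioi 0 := by
    ext s
    simp only [mem_image, mem_Ioi]
    constructor
    · rintro ⟨σ, hσ, rfl⟩; positivity
    · intro hs
      exact ⟨d / s, by positivity, by field_simp⟩
  have hderiv : ∀ σ ∈ Ioi (0:ℝ),
      HasDerivWithinAt (fun σ : ℝ => d / σ) (d * -(σ ^ 2)⁻¹) (Ioi 0) σ := by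
    intro σ hσ
    have : HasDerivAt (fun σ : ℝ => d / σ) (d * -(σ ^ 2)⁻¹) σ := by
      simpa [div_eq_mul_inv] using (hasDerivAt_inv (ne_of_gt hσ)).const_mul d
    exact this.hasDerivWithinAt
  have hinj : InjOn (fun σ : ℝ => d / σ) (Ioi 0) := by
    intro a ha b hb hab
    have ha' : (a:ℝ) ≠ 0 := ne_of_gt ha
    have hb' : (b:ℝ) ≠ 0 := ne_of_gt hb
    field_simp at hab
    linarith
  have hchg := lintegral_image_deriv measurableSet_Ioi hderiv hinj (Hf ξ)
  rw [himg] at hchg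
  have hpt : ∀ σ ∈ Ioi (0:ℝ),
      ENNReal.ofReal |d * -(σ ^ 2)⁻¹| * Hf ξ (d / σ) =
      ENNReal.ofReal d * (ENNReal.ofReal (σ ^ (-2:ℝ)) * Hf ξ (d / σ)) := by
    intro σ hσ
    have hσ' : (0:ℝ) < σ := hσ
    have h1 : |d * -(σ ^ 2)⁻¹| = d * (σ ^ 2)⁻¹ := by
      have : d * -(σ ^ 2)⁻¹ = -(d * (σ ^ 2)⁻¹) := by ring
      rw [this, abs_neg, abs_of_pos (by positivity)]
    have h2 : σ ^ (-2:ℝ) = (σ ^ 2)⁻¹ := by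
      rw [Real.rpow_neg hσ'.le, show (2:ℝ) = ((2:ℕ):ℝ) by norm_num, Real.rpow_natCast]
    rw [h1, h2, ENNReal.ofReal_mul hd.le, mul_assoc]
  rw [setLIntegral_congr_fun measurableSet_Ioi
    hpt] at hchg
  rw [lintegral_const_mul' _ _ ENNReal.ofReal_ne_top] at hchg
  rw [hchg, ← mul_assoc, ← ENNReal.ofReal_mul (by positivity),
    inv_mul_cancel₀ (ne_of_gt hd), ENNReal.ofReal_one, one_mul]

/-- For data `y_1 < y_2` and measurable nonnegative `π`, the GEV posterior
normalizing constant for `n = 2` satisfies the exact identity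
`K_2(π; y) = (1/2)(y_2 - y_1)⁻¹ ∫_ℝ π(ξ) dξ` (as an identity in `[0,∞]`). -/
theorem gev_K2_eq (y : Fin 2 → ℝ) (hy : y 0 < y 1) (p : ℝ → ℝ)
    (hmeas : Measurable p) (hnn : ∀ ξ, 0 ≤ p ξ) :
    gevK 2 y p = ENNReal.ofReal ((1 / 2) * (y 1 - y 0)⁻¹) *
      ∫⁻ ξ : ℝ, ENNReal.ofReal (p ξ) := by
  have hd : (0:ℝ) < y 1 - y 0 := sub_pos.mpr hy
  have key : ∀ ξ : ℝ,
      (∫⁻ μ : ℝ, ∫⁻ σ in Set.Ioi (0 : ℝ), ENNReal.ofReal (gevDens 2 y μ σ ξ)) =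
        ENNReal.ofReal ((1 / 2) * (y 1 - y 0)⁻¹) := by
    intro ξ
    set G : ℝ → ℝ → ℝ≥0∞ := fun μ σ =>
      ENNReal.ofReal (σ ^ (-3 : ℝ) * (g1 ξ ((y 0 - μ) / σ) * g1 ξ ((y 1 - μ) / σ))) with hGdef
    have step1 : (∫⁻ μ : ℝ, ∫⁻ σ in Set.Ioi (0 : ℝ), ENNReal.ofReal (gevDens 2 y μ σ ξ)) =
        ∫⁻ μ : ℝ, ∫⁻ σ in Set.Ioi (0 : ℝ), G μ σ := by
      refine lintegral_congr fun μ => ?_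
      refine setLIntegral_congr_fun measurableSet_Ioi
        (fun σ hσ => ?_)
      rw [gevDens_eq y ξ μ σ hσ]
    have hGm : Measurable (Function.uncurry G) := by
      apply Measurable.ennreal_ofReal
      apply Measurable.mul
      · fun_prop
      · apply Measurable.mul
        · exact (measurable_g1 ξ).comp
            ((measurable_const.sub measurable_fst).div measurable_snd)
        · exact (measurable_g1 ξ).comp
            ((measurable_const.sub measurable_fst).div measurable_snd)
    have step2 : (∫⁻ μ : ℝ, ∫⁻ σ in Set.Ioi (0 : ℝ), G μ σ) =
        ∫⁻ σ in Set.Ioi (0 : ℝ), ∫⁻ μ : ℝ, G μ σ :=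
      lintegral_lintegral_swap hGm.aemeasurable
    have step3 : (∫⁻ σ in Set.Ioi (0 : ℝ), ∫⁻ μ : ℝ, G μ σ) =
        ∫⁻ σ in Set.Ioi (0 : ℝ), ENNReal.ofReal (σ ^ (-2 : ℝ)) * Hf ξ ((y 1 - y 0) / σ) := by
      refine setLIntegral_congr_fun measurableSet_Ioi
        (fun σ hσ => ?_)
      exact mu_step (y 0) (y 1) ξ σ hσ
    rw [step1, step2, step3, sigma_step ξ _ hd, Hf_half]
    rw [ENNReal.ofReal_mul (by norm_num)]
    have : ENNReal.ofReal (1/2 : ℝ) = 1/2 := by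
      rw [show (1/2 : ℝ) = (2:ℝ)⁻¹ by norm_num, ENNReal.ofReal_inv_of_pos two_pos,
        ENNReal.ofReal_ofNat]
      norm_num
    rw [this, mul_comm]
  unfold gevK
  have : ∀ ξ : ℝ, ENNReal.ofReal (p ξ) *
      (∫⁻ μ : ℝ, ∫⁻ σ in Set.Ioi (0 : ℝ), ENNReal.ofReal (gevDens 2 y μ σ ξ)) =
      ENNReal.ofReal ((1 / 2) * (y 1 - y 0)⁻¹) * ENNReal.ofReal (p ξ) := by
    intro ξ
    rw [key ξ, mul_comm]
  rw [lintegral_congr this, lintegral_const_mul' _ _ ENNReal.ofReal_ne_top]
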